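/- Let f : ℝⁿ → ℝ be convex, differentiable at x₀, with f(x₀) = 0 and ∇f(x₀) = 0. Suppose that for some t > 0 and all i = 1,…,n and all |h| < 1, one has 0 ≤ f(x₀ + h·eᵢ) ≤ t·h². Then f(x₀ + z) ≤ n·t·|z|² for all z with |z| < 1/√n; in particular, a paraboloid of opening 2n·t is tangent from above to f at x₀ on the ball of radius 1/√n. -/

import Mathlib

set_option maxHeartbeats 800000

open Metric Set Finset

noncomputable section

/-- Coordinate-direction paraboloid bounds plus convexity give a full paraboloid
bound on the ball of radius 1/√n. -/
theorem stmt7 (n : ℕ) (f : EuclideanSpace ℝ (Fin n) → ℝ) (hf : ConvexOn ℝ univ f)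
    (x₀ : EuclideanSpace ℝ (Fin n))
    (hd : HasFDerivAt f (0 : EuclideanSpace ℝ (Fin n) →L[ℝ] ℝ) x₀)
    (hf0 : f x₀ = 0) (t : ℝ) (ht : 0 < t)
    (hcoord : ∀ (i : Fin n) (h : ℝ), |h| < 1 →
      0 ≤ f (x₀ + h • EuclideanSpace.single i 1) ∧
        f (x₀ + h • EuclideanSpace.single i 1) ≤ t * h^2) :
    ∀ z : EuclideanSpace ℝ (Fin n), ‖z‖ < 1 / Real.sqrt n →
      f (x₀ + z) ≤ n * t * ‖z‖^2 := by
  intro z hz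
  rcases Nat.eq_zero_or_pos n with hn | hn
  · subst hn
    simp [Real.sqrt_zero] at hz
    linarith [norm_nonneg z]
  have hn1 : (1:ℝ) ≤ n := by exact_mod_cast hn
  have hsn : (0:ℝ) < Real.sqrt n := Real.sqrt_pos.2 (by positivity)
  by_cases hz0 : z = 0
  · subst hz0
    simp [hf0]
  have hznorm : 0 < ‖z‖ := norm_pos_iff.2 hz0
  set h : ℝ := Real.sqrt n * ‖z‖ with hh_def
  have hh0 : 0 < h := by positivity
  have hh1 : h < 1 := by
    have h2 : Real.sqrt n * ‖z‖ < Real.sqrt n * (1 / Real.sqrt n) := mul_lt_mul_of_pos_left hz hsn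
    rwa [mul_one_div, div_self hsn.ne'] at h2
  have hh2 : h ^ 2 = n * ‖z‖ ^ 2 := by
    rw [hh_def, mul_pow, Real.sq_sqrt (by positivity : (0:ℝ) ≤ (n:ℝ))]
  set S : ℝ := ∑ i : Fin n, |z i| with hS_def
  have hS0 : 0 ≤ S := Finset.sum_nonneg fun i _ => abs_nonneg _
  have hSh : S ≤ h := by
    have h1 : S ^ 2 ≤ n * ∑ i : Fin n, (z i) ^ 2 := by
      have := sq_sum_le_card_mul_sum_sq (s := Finset.univ) (f := fun i : Fin n => |z i|)
      simpa [sq_abs] using this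
    have h2 : ‖z‖ ^ 2 = ∑ i : Fin n, (z i) ^ 2 := by
      rw [EuclideanSpace.norm_eq, Real.sq_sqrt (by positivity)]
      simp [Real.norm_eq_abs, sq_abs]
    have h3 : S ^ 2 ≤ h ^ 2 := by rw [hh2, h2]; exact h1
    nlinarith
  -- weights and points
  set w : Option (Fin n) → ℝ := fun o => o.elim (1 - S / h) (fun i => |z i| / h) with hw_def
  set p : Option (Fin n) → EuclideanSpace ℝ (Fin n) := fun o =>
    o.elim x₀ (fun i => x₀ + (Real.sign (z i) * h) • EuclideanSpace.single i 1) with hp_def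
  have hw0 : ∀ o ∈ (Finset.univ : Finset (Option (Fin n))), 0 ≤ w o := by
    rintro (_ | i) _
    · simp only [hw_def, Option.elim]
      have : S / h ≤ 1 := (div_le_one hh0).2 hSh
      linarith
    · simp only [hw_def, Option.elim]
      positivity
  have hw1 : ∑ o : Option (Fin n), w o = 1 := by
    rw [Fintype.sum_option]
    simp only [hw_def, Option.elim]
    rw [← Finset.sum_div]
    rw [← hS_def]
    field_simp
    ring
  have hmem : ∀ o ∈ (Finset.univ : Finset (Option (Fin n))), p o ∈ (univ : Set (EuclideanSpace ℝ (Fin n))) := by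
    intro o _; trivial
  have hsum : ∑ o : Option (Fin n), w o • p o = x₀ + z := by
    rw [Fintype.sum_option]
    simp only [hw_def, hp_def, Option.elim]
    have key : ∀ i : Fin n, (|z i| / h) • (x₀ + (Real.sign (z i) * h) • EuclideanSpace.single i 1)
        = (|z i| / h) • x₀ + (z i) • EuclideanSpace.single i 1 := by
      intro i
      rw [smul_add, smul_smul]
      congr 1
      congr 1
      rcases lt_trichotomy (z i) 0 with hlt | heq | hgt
      · rw [Real.sign_of_neg hlt, abs_of_neg hlt]
        field_simp
      · simp [heq]
      · rw [Real.sign_of_pos hgt, abs_of_pos hgt]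
        field_simp
    rw [Finset.sum_congr rfl (fun i _ => key i), Finset.sum_add_distrib, ← Finset.sum_smul,
      ← Finset.sum_div, ← hS_def]
    have hz_sum : ∑ i : Fin n, (z i) • EuclideanSpace.single i 1 = z := by
      have hb := (EuclideanSpace.basisFun (Fin n) ℝ).sum_repr z
      simpa only [EuclideanSpace.basisFun_apply, EuclideanSpace.basisFun_repr] using hb
    rw [hz_sum]
    rw [← add_assoc, ← add_smul]
    have : (1 - S / h + S / h) = 1 := by ring
    rw [this, one_smul]
  have key := hf.map_sum_le hw0 hw1 hmem
  rw [hsum] at key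
  simp only [smul_eq_mul] at key
  have hfp : ∀ i : Fin n, f (p (some i)) ≤ t * h ^ 2 := by
    intro i
    have hsign : |Real.sign (z i)| ≤ 1 := by
      rcases Real.sign_apply_eq (z i) with h' | h' | h' <;> rw [h'] <;> norm_num
    have habs : |Real.sign (z i) * h| < 1 := by
      rw [abs_mul, abs_of_pos hh0]
      calc |Real.sign (z i)| * h ≤ 1 * h := by
            apply mul_le_mul_of_nonneg_right hsign hh0.le
      _ = h := one_mul h
      _ < 1 := hh1
    have := (hcoord i (Real.sign (z i) * h) habs).2
    simp only [hp_def, Option.elim]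
    refine this.trans ?_
    have hsq : Real.sign (z i) ^ 2 ≤ 1 := by
      rcases Real.sign_apply_eq (z i) with h' | h' | h' <;> rw [h'] <;> norm_num
    have h2 : (Real.sign (z i) * h) ^ 2 ≤ h ^ 2 := by
      rw [mul_pow]
      nlinarith [sq_nonneg h]
    exact mul_le_mul_of_nonneg_left h2 ht.le
  have hrhs : ∑ o : Option (Fin n), w o * f (p o) ≤ t * h ^ 2 := by
    rw [Fintype.sum_option]
    simp only [hw_def, hp_def, Option.elim]
    rw [hf0, mul_zero, zero_add]
    calc ∑ i : Fin n, (|z i| / h) * f (x₀ + (Real.sign (z i) * h) • EuclideanSpace.single i 1)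
        ≤ ∑ i : Fin n, (|z i| / h) * (t * h ^ 2) := by
          apply Finset.sum_le_sum
          intro i _
          apply mul_le_mul_of_nonneg_left _ (by positivity)
          exact hfp i
      _ = (S / h) * (t * h ^ 2) := by rw [← Finset.sum_mul, ← Finset.sum_div, ← hS_def]
      _ ≤ 1 * (t * h ^ 2) := by
          apply mul_le_mul_of_nonneg_right ((div_le_one hh0).2 hSh) (by positivity)
      _ = t * h ^ 2 := one_mul _
  calc f (x₀ + z) ≤ ∑ o : Option (Fin n), w o * f (p o) := key
    _ ≤ t * h ^ 2 := hrhs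
    _ = n * t * ‖z‖ ^ 2 := by rw [hh2]; ring
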